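/- Fix t > 0, a unitary U ∈ U(m−1), and an integer N ≥ 1. Define φ(v, w) = (e^{−2t}v, e^{−t}Uw) on ℝ × ℂ^{m−1}. Let h(v,w) = Σ c_{α,β} v^α w^β be a real analytic function on a neighborhood O of 0 (with Taylor expansion in real coordinates, where v^α w^β denotes monomials in v and the real/imaginary parts of the components of w), all c_{α,β} real, such that N = min{2α + |β| : c_{α,β} ≠ 0}. Let P(v,w) = Σ_{2α+|β| = N} c_{α,β} v^α w^β. If n_j → ∞ is a sequence with U^{n_j} → Id, then for every (v,w) ∈ ℝ × ℂ^{m−1}, e^{N n_j t} h(φ^{n_j}(v,w)) → P(v,w). -/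

import Mathlib

open Matrix Filter

noncomputable section

/-- Variables for real polynomials/power series on `ℝ × ℂ^k`: `none` corresponds to `v`,
`some (i, true)` to `Re(wᵢ)` and `some (i, false)` to `Im(wᵢ)`. -/
def SVars (k : ℕ) : Type := Option (Fin k × Bool)

instance (k : ℕ) : DecidableEq (SVars k) := by unfold SVars; infer_instance

/-- The weight of a variable: `v` has weight `2`, the real/imaginary parts of the `wᵢ`
have weight `1`. -/
def sWeight {k : ℕ} (s : SVars k) : ℕ := Option.elim s 2 (fun _ => 1)

/-- Weighted degree `2α + |β|` of a monomial `v^α w^β`. -/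
def wdeg {k : ℕ} (d : SVars k →₀ ℕ) : ℕ := d.sum fun s e => sWeight s * e

/-- Evaluation of the variables at a point `(v, w) ∈ ℝ × ℂ^k`. -/
def sEval {k : ℕ} (x : ℝ × EuclideanSpace ℂ (Fin k)) : SVars k → ℝ :=
  fun s => Option.elim s x.1 (fun p => if p.2 then (x.2 p.1).re else (x.2 p.1).im)

/-- The contraction `φ(v, w) = (e^{−2t} v, e^{−t} U w)` on `ℝ × ℂ^{k}`. -/
def phiMap {k : ℕ} (t : ℝ) (U : Matrix (Fin k) (Fin k) ℂ)
    (x : ℝ × EuclideanSpace ℂ (Fin k)) : ℝ × EuclideanSpace ℂ (Fin k) :=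
  (Real.exp (-(2 * t)) * x.1,
    (WithLp.toLp 2 (fun i => Complex.exp (-t) * ∑ j : Fin k, U i j * x.2 j) : EuclideanSpace ℂ (Fin k)))

lemma iterate_phiMap {k : ℕ} (t : ℝ) (U : Matrix (Fin k) (Fin k) ℂ)
    (x : ℝ × EuclideanSpace ℂ (Fin k)) (n : ℕ) :
    (phiMap t U)^[n] x =
      (Real.exp (-(2 * t)) ^ n * x.1,
        (WithLp.toLp 2 (fun i => Complex.exp (-t) ^ n * ((U ^ n) *ᵥ x.2) i) : EuclideanSpace ℂ (Fin k))) := by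
  induction n with
  | zero =>
      refine Prod.ext (by simp) (PiLp.ext fun i => ?_)
      simp [Matrix.one_mulVec]
  | succ n ih =>
      rw [Function.iterate_succ_apply', ih]
      refine Prod.ext (by simp [phiMap]; ring) (PiLp.ext fun i => ?_)
      show Complex.exp (-t) * ∑ j : Fin k, U i j * (Complex.exp (-t) ^ n * ((U ^ n) *ᵥ x.2) j) = _
      have : (U ^ (n+1)) *ᵥ x.2 = U *ᵥ ((U ^ n) *ᵥ x.2) := by
        rw [Matrix.mulVec_mulVec, ← pow_succ']
      rw [this]
      simp only [Matrix.mulVec, dotProduct, Finset.mul_sum, pow_succ]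
      exact Finset.sum_congr rfl fun j _ => Finset.sum_congr rfl fun l _ => by ring

lemma sEval_iterate {k : ℕ} (t : ℝ) (U : Matrix (Fin k) (Fin k) ℂ)
    (x : ℝ × EuclideanSpace ℂ (Fin k)) (n : ℕ) (s : SVars k) :
    sEval ((phiMap t U)^[n] x) s =
      Real.exp (-t) ^ (n * sWeight s) *
        sEval (x.1, (WithLp.toLp 2 (fun i => ((U ^ n) *ᵥ x.2) i) : EuclideanSpace ℂ (Fin k))) s := by
  rw [iterate_phiMap]
  have hre : Complex.exp (-(t:ℂ)) ^ n = ((Real.exp (-t) ^ n : ℝ) : ℂ) := by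
    push_cast [Complex.ofReal_exp]
    rfl
  obtain (_ | ⟨i, b⟩) := s
  · show Real.exp (-(2*t)) ^ n * x.1 = _
    have : Real.exp (-(2*t)) = Real.exp (-t) ^ 2 := by
      rw [← Real.exp_nat_mul]; norm_num
    rw [this, ← pow_mul]
    show _ = Real.exp (-t) ^ (n * 2) * x.1
    ring_nf
  · obtain (_|_) := b
    · show (Complex.exp (-(t:ℂ)) ^ n * ((U ^ n) *ᵥ x.2) i).im = _
      rw [hre, Complex.im_ofReal_mul]
      show _ = Real.exp (-t) ^ (n * 1) * (((U ^ n) *ᵥ x.2) i).im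
      rw [mul_one]
    · show (Complex.exp (-(t:ℂ)) ^ n * ((U ^ n) *ᵥ x.2) i).re = _
      rw [hre, Complex.re_ofReal_mul]
      show _ = Real.exp (-t) ^ (n * 1) * (((U ^ n) *ᵥ x.2) i).re
      rw [mul_one]

lemma norm_iterate_le {k : ℕ} {t : ℝ} (ht : 0 < t) {U : Matrix (Fin k) (Fin k) ℂ}
    (hU : U ∈ Matrix.unitaryGroup (Fin k) ℂ)
    (x : ℝ × EuclideanSpace ℂ (Fin k)) (n : ℕ) :
    ‖(phiMap t U)^[n] x‖ ≤ Real.exp (-t) ^ n *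
      max |x.1| (Real.sqrt k * ∑ l, ‖x.2 l‖) := by
  set M := max |x.1| (Real.sqrt k * ∑ l, ‖x.2 l‖) with hM
  have hMnn : (0:ℝ) ≤ Real.sqrt k * ∑ l, ‖x.2 l‖ :=
    mul_nonneg (Real.sqrt_nonneg _) (Finset.sum_nonneg fun _ _ => norm_nonneg _)
  have hr0 : (0:ℝ) < Real.exp (-t) := Real.exp_pos _
  have hr1 : Real.exp (-t) ≤ 1 := by
    rw [Real.exp_le_one_iff]; linarith
  rw [Prod.norm_def, iterate_phiMap]
  apply max_le
  · show |Real.exp (-(2*t)) ^ n * x.1| ≤ _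
    rw [abs_mul, abs_pow, abs_of_pos (Real.exp_pos _)]
    have h1 : Real.exp (-(2*t)) ^ n ≤ Real.exp (-t) ^ n := by
      apply pow_le_pow_left₀ (by positivity)
      rw [Real.exp_le_exp]; linarith
    calc Real.exp (-(2*t)) ^ n * |x.1| ≤ Real.exp (-t) ^ n * |x.1| := by
          apply mul_le_mul_of_nonneg_right h1 (abs_nonneg _)
      _ ≤ Real.exp (-t) ^ n * M := by
          apply mul_le_mul_of_nonneg_left (le_max_left _ _) (by positivity)
  · -- Euclidean norm of the second component
    have hUn : (U ^ n) ∈ Matrix.unitaryGroup (Fin k) ℂ := pow_mem hU n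
    have hentry : ∀ i j, ‖(U ^ n) i j‖ ≤ 1 := fun i j =>
      entry_norm_bound_of_unitary hUn i j
    have hcomp : ∀ i, ‖((U ^ n) *ᵥ x.2) i‖ ≤ ∑ l, ‖x.2 l‖ := by
      intro i
      calc ‖∑ l, (U ^ n) i l * x.2 l‖ ≤ ∑ l, ‖(U ^ n) i l * x.2 l‖ := norm_sum_le _ _
        _ ≤ ∑ l, ‖x.2 l‖ := by
            apply Finset.sum_le_sum
            intro l _
            rw [norm_mul]
            calc ‖(U ^ n) i l‖ * ‖x.2 l‖ ≤ 1 * ‖x.2 l‖ :=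
                  mul_le_mul_of_nonneg_right (hentry i l) (norm_nonneg _)
              _ = ‖x.2 l‖ := one_mul _
    have hre : Complex.exp (-(t:ℂ)) ^ n = ((Real.exp (-t) ^ n : ℝ) : ℂ) := by
      push_cast [Complex.ofReal_exp]; rfl
    rw [EuclideanSpace.norm_eq]
    have step : Real.sqrt (∑ i, ‖Complex.exp (-(t:ℂ)) ^ n * ((U ^ n) *ᵥ x.2) i‖ ^ 2)
        ≤ Real.sqrt (∑ _i : Fin k, (Real.exp (-t) ^ n * ∑ l, ‖x.2 l‖) ^ 2) := by
      apply Real.sqrt_le_sqrt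
      apply Finset.sum_le_sum
      intro i _
      apply pow_le_pow_left₀ (norm_nonneg _)
      rw [norm_mul, hre, Complex.norm_real, Real.norm_eq_abs, abs_of_pos (by positivity)]
      exact mul_le_mul_of_nonneg_left (hcomp i) (by positivity)
    refine le_trans step ?_
    have hSnn : (0:ℝ) ≤ Real.exp (-t) ^ n * ∑ l, ‖x.2 l‖ :=
      mul_nonneg (pow_nonneg hr0.le n) (Finset.sum_nonneg fun _ _ => norm_nonneg _)
    have hcard : Real.sqrt (∑ _i : Fin k, (Real.exp (-t) ^ n * ∑ l, ‖x.2 l‖) ^ 2)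
        = Real.sqrt k * (Real.exp (-t) ^ n * ∑ l, ‖x.2 l‖) := by
      rw [Finset.sum_const, Finset.card_univ, Fintype.card_fin, nsmul_eq_mul,
        Real.sqrt_mul (Nat.cast_nonneg k), Real.sqrt_sq hSnn]
    rw [hcard]
    calc Real.sqrt k * (Real.exp (-t) ^ n * ∑ l, ‖x.2 l‖)
        = Real.exp (-t) ^ n * (Real.sqrt k * ∑ l, ‖x.2 l‖) := by ring
      _ ≤ Real.exp (-t) ^ n * M := by
          apply mul_le_mul_of_nonneg_left (le_max_right _ _) (by positivity)

lemma key_sum {k : ℕ} (t : ℝ) (U : Matrix (Fin k) (Fin k) ℂ) (N : ℕ)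
    (Q : MvPolynomial (SVars k) ℝ)
    (x : ℝ × EuclideanSpace ℂ (Fin k)) (n : ℕ) :
    Real.exp ((N:ℝ) * n * t) * MvPolynomial.eval (sEval ((phiMap t U)^[n] x)) Q
      = ∑ d ∈ Q.support, Real.exp (((N:ℝ) - (wdeg d : ℝ)) * (n * t)) *
          (Q.coeff d * ∏ s ∈ d.support,
            sEval (x.1, (WithLp.toLp 2 (fun i => ((U ^ n) *ᵥ x.2) i) : EuclideanSpace ℂ (Fin k))) s ^ d s) := by
  rw [MvPolynomial.eval_eq, Finset.mul_sum]
  apply Finset.sum_congr rfl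
  intro d _
  have hwd : wdeg d = ∑ s ∈ d.support, sWeight s * d s := rfl
  have hprod : ∏ s ∈ d.support, sEval ((phiMap t U)^[n] x) s ^ d s
      = Real.exp (-t) ^ (n * wdeg d) *
        ∏ s ∈ d.support,
          sEval (x.1, (WithLp.toLp 2 (fun i => ((U ^ n) *ᵥ x.2) i) : EuclideanSpace ℂ (Fin k))) s ^ d s := by
    calc ∏ s ∈ d.support, sEval ((phiMap t U)^[n] x) s ^ d s
        = ∏ s ∈ d.support, (Real.exp (-t) ^ (n * (sWeight s * d s)) *
            sEval (x.1, (WithLp.toLp 2 (fun i => ((U ^ n) *ᵥ x.2) i) : EuclideanSpace ℂ (Fin k))) s ^ d s) := by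
          refine Finset.prod_congr rfl fun s _ => ?_
          rw [sEval_iterate, mul_pow, ← pow_mul, mul_assoc]
      _ = (∏ s ∈ d.support, Real.exp (-t) ^ (n * (sWeight s * d s))) *
            ∏ s ∈ d.support,
              sEval (x.1, (WithLp.toLp 2 (fun i => ((U ^ n) *ᵥ x.2) i) : EuclideanSpace ℂ (Fin k))) s ^ d s := by
          rw [Finset.prod_mul_distrib]
      _ = _ := by
          congr 1
          rw [Finset.prod_pow_eq_pow_sum]
          congr 1
          rw [hwd, Finset.mul_sum]
  rw [hprod]
  have hexp : Real.exp ((N:ℝ) * n * t) * Real.exp (-t) ^ (n * wdeg d)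
      = Real.exp (((N:ℝ) - (wdeg d : ℝ)) * (n * t)) := by
    rw [← Real.exp_nat_mul, ← Real.exp_add]
    congr 1
    push_cast
    ring
  calc Real.exp ((N:ℝ) * n * t) * (Q.coeff d * (Real.exp (-t) ^ (n * wdeg d) *
        ∏ s ∈ d.support,
          sEval (x.1, (WithLp.toLp 2 (fun i => ((U ^ n) *ᵥ x.2) i) : EuclideanSpace ℂ (Fin k))) s ^ d s))
      = (Real.exp ((N:ℝ) * n * t) * Real.exp (-t) ^ (n * wdeg d)) *
        (Q.coeff d * ∏ s ∈ d.support,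
          sEval (x.1, (WithLp.toLp 2 (fun i => ((U ^ n) *ᵥ x.2) i) : EuclideanSpace ℂ (Fin k))) s ^ d s) := by
        ring
    _ = _ := by rw [hexp]

/-- Fix `t > 0`, a unitary `U`, and `N ≥ 1`. Let `h` be real analytic near
`0` on `ℝ × ℂ^k` with Taylor expansion `Σ c_{α,β} v^α w^β` whose degree-`≤ N` truncation is the
polynomial `Q` (so `|h − Q| ≤ C‖·‖^{N+1}` near `0`), all of whose monomials satisfy
`2α + |β| ≥ N`, with `N = min{2α + |β| : c_{α,β} ≠ 0}` attained. Let `P` be the weighted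
degree-`N` part of `Q`. If `nⱼ → ∞` with `U^{nⱼ} → Id`, then for every `x = (v, w)`,
`e^{N nⱼ t} h(φ^{nⱼ}(x)) → P(x)`. -/
theorem stmt15 {k : ℕ} (t : ℝ) (ht : 0 < t)
    (U : Matrix (Fin k) (Fin k) ℂ) (hU : U ∈ Matrix.unitaryGroup (Fin k) ℂ)
    (N : ℕ) (hN : 1 ≤ N)
    (Q : MvPolynomial (SVars k) ℝ)
    (hdeg : Q.totalDegree ≤ N)
    (hmin : ∀ d ∈ Q.support, N ≤ wdeg d)
    (hattained : ∃ d ∈ Q.support, wdeg d = N)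
    (h : ℝ × EuclideanSpace ℂ (Fin k) → ℝ)
    (O : Set (ℝ × EuclideanSpace ℂ (Fin k))) (hO : O ∈ nhds 0)
    (C : ℝ) (hC : 0 < C)
    (hE : ∀ x ∈ O, |h x - MvPolynomial.eval (sEval x) Q| ≤ C * ‖x‖ ^ (N + 1))
    (nseq : ℕ → ℕ) (hns : Tendsto nseq atTop atTop)
    (hUlim : Tendsto (fun j => U ^ nseq j) atTop (nhds 1))
    (x : ℝ × EuclideanSpace ℂ (Fin k)) :
    Tendsto (fun j => Real.exp ((N : ℝ) * nseq j * t) * h ((phiMap t U)^[nseq j] x)) atTop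
      (nhds (MvPolynomial.eval (sEval x)
        (∑ d ∈ Q.support.filter (fun d => wdeg d = N),
          MvPolynomial.monomial d (MvPolynomial.coeff d Q)))) := by
  have hr0 : (0:ℝ) < Real.exp (-t) := Real.exp_pos _
  have hr1 : Real.exp (-t) < 1 := by
    rw [Real.exp_lt_one_iff]; linarith
  -- convergence of the entries of `U ^ nseq j`
  have hUentry : ∀ i l : Fin k, Tendsto (fun j => (U ^ nseq j) i l) atTop
      (nhds ((1 : Matrix (Fin k) (Fin k) ℂ) i l)) := by
    intro i l
    exact (((continuous_apply l).comp (continuous_apply i)).tendsto _).comp hUlim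
  have hw : ∀ i, Tendsto (fun j => ((U ^ nseq j) *ᵥ x.2) i) atTop (nhds (x.2 i)) := by
    intro i
    have h1 : Tendsto (fun j => ∑ l, (U ^ nseq j) i l * x.2 l) atTop
        (nhds (∑ l, (1 : Matrix (Fin k) (Fin k) ℂ) i l * x.2 l)) :=
      tendsto_finset_sum _ fun l _ => (hUentry i l).mul tendsto_const_nhds
    have h2 : (∑ l, (1 : Matrix (Fin k) (Fin k) ℂ) i l * x.2 l) = x.2 i := by
      have := congrFun (Matrix.one_mulVec x.2) i
      simpa [Matrix.mulVec, dotProduct] using this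
    rw [h2] at h1
    exact h1
  -- convergence of the variable evaluations
  have hgs : ∀ s : SVars k, Tendsto
      (fun j => sEval (x.1, (WithLp.toLp 2 (fun i => ((U ^ nseq j) *ᵥ x.2) i) : EuclideanSpace ℂ (Fin k))) s)
      atTop (nhds (sEval x s)) := by
    intro s
    obtain (_ | ⟨i, b⟩) := s
    · exact tendsto_const_nhds
    · obtain (_ | _) := b
      · simp only [sEval, Option.elim, if_neg (Bool.false_ne_true)]
        exact (Complex.continuous_im.tendsto _).comp (hw i)
      · simp only [sEval, Option.elim, if_pos rfl]
        exact (Complex.continuous_re.tendsto _).comp (hw i)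
  -- the limit value, rewritten
  have htarget : MvPolynomial.eval (sEval x)
      (∑ d ∈ Q.support.filter (fun d => wdeg d = N),
        MvPolynomial.monomial d (MvPolynomial.coeff d Q))
      = ∑ d ∈ Q.support,
          (if wdeg d = N then
            MvPolynomial.coeff d Q * ∏ s ∈ d.support, sEval x s ^ d s else 0) := by
    rw [map_sum, Finset.sum_filter]
    refine Finset.sum_congr rfl fun d _ => ?_
    split
    · rw [MvPolynomial.eval_monomial]
      rfl
    · rfl
  -- convergence of the polynomial part
  have hpoly : Tendsto (fun j => Real.exp ((N : ℝ) * nseq j * t) *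
      MvPolynomial.eval (sEval ((phiMap t U)^[nseq j] x)) Q) atTop
      (nhds (∑ d ∈ Q.support,
        (if wdeg d = N then
          MvPolynomial.coeff d Q * ∏ s ∈ d.support, sEval x s ^ d s else 0))) := by
    have heq : (fun j => Real.exp ((N : ℝ) * nseq j * t) *
        MvPolynomial.eval (sEval ((phiMap t U)^[nseq j] x)) Q)
        = fun j => ∑ d ∈ Q.support, Real.exp (((N:ℝ) - (wdeg d : ℝ)) * (nseq j * t)) *
            (Q.coeff d * ∏ s ∈ d.support,
              sEval (x.1, (WithLp.toLp 2 (fun i => ((U ^ nseq j) *ᵥ x.2) i) : EuclideanSpace ℂ (Fin k))) s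
                ^ d s) := by
      funext j
      exact key_sum t U N Q x (nseq j)
    rw [heq]
    apply tendsto_finset_sum
    intro d hd
    have hprod_lim : Tendsto (fun j => Q.coeff d * ∏ s ∈ d.support,
        sEval (x.1, (WithLp.toLp 2 (fun i => ((U ^ nseq j) *ᵥ x.2) i) : EuclideanSpace ℂ (Fin k))) s ^ d s)
        atTop (nhds (Q.coeff d * ∏ s ∈ d.support, sEval x s ^ d s)) :=
      tendsto_const_nhds.mul (tendsto_finset_prod _ fun s _ => (hgs s).pow _)
    by_cases hdN : wdeg d = N
    · rw [if_pos hdN]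
      have : (fun j => Real.exp (((N:ℝ) - (wdeg d : ℝ)) * (nseq j * t)) *
          (Q.coeff d * ∏ s ∈ d.support,
            sEval (x.1, (WithLp.toLp 2 (fun i => ((U ^ nseq j) *ᵥ x.2) i) : EuclideanSpace ℂ (Fin k))) s ^ d s))
          = (fun j => Q.coeff d * ∏ s ∈ d.support,
            sEval (x.1, (WithLp.toLp 2 (fun i => ((U ^ nseq j) *ᵥ x.2) i) : EuclideanSpace ℂ (Fin k))) s
              ^ d s) := by
        funext j
        rw [hdN, sub_self, zero_mul, Real.exp_zero, one_mul]
      rw [this]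
      exact hprod_lim
    · rw [if_neg hdN]
      have hlt : (N:ℝ) - (wdeg d : ℝ) < 0 := by
        have h1 : N < wdeg d := lt_of_le_of_ne (hmin d hd) (fun e => hdN e.symm)
        have h2 : (N:ℝ) < (wdeg d : ℝ) := by exact_mod_cast h1
        linarith
      have hexp : Tendsto (fun j => Real.exp (((N:ℝ) - (wdeg d : ℝ)) * (nseq j * t)))
          atTop (nhds 0) := by
        apply Real.tendsto_exp_atBot.comp
        have h1 : Tendsto (fun j => (nseq j : ℝ)) atTop atTop :=
          tendsto_natCast_atTop_atTop.comp hns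
        have h2 : Tendsto (fun j => (nseq j : ℝ) * t) atTop atTop :=
          h1.atTop_mul_const ht
        exact (tendsto_const_mul_atBot_of_neg hlt).mpr h2
      have := hexp.mul hprod_lim
      rw [zero_mul] at this
      exact this
  -- the error part
  obtain ⟨ε, hε, hball⟩ := Metric.mem_nhds_iff.mp hO
  set M := max |x.1| (Real.sqrt k * ∑ l, ‖x.2 l‖) with hM
  have hM0 : (0:ℝ) ≤ M := le_trans (abs_nonneg _) (le_max_left _ _)
  have hrn : Tendsto (fun n : ℕ => Real.exp (-t) ^ n * M) atTop (nhds 0) := by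
    have := (tendsto_pow_atTop_nhds_zero_of_lt_one hr0.le hr1).mul_const M
    rwa [zero_mul] at this
  have hmem : ∀ᶠ n in atTop, (phiMap t U)^[n] x ∈ O := by
    filter_upwards [hrn.eventually (gt_mem_nhds hε)] with n hn
    apply hball
    rw [Metric.mem_ball, dist_zero_right]
    exact lt_of_le_of_lt (norm_iterate_le ht hU x n) hn
  have herr : Tendsto (fun j => Real.exp ((N : ℝ) * nseq j * t) *
      (h ((phiMap t U)^[nseq j] x) -
        MvPolynomial.eval (sEval ((phiMap t U)^[nseq j] x)) Q)) atTop (nhds 0) := by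
    have hexpid : ∀ n : ℕ, Real.exp ((N:ℝ) * n * t) * (Real.exp (-t) ^ n) ^ (N + 1)
        = Real.exp (-((n:ℝ) * t)) := by
      intro n
      rw [← pow_mul, ← Real.exp_nat_mul, ← Real.exp_add]
      congr 1
      push_cast
      ring
    apply squeeze_zero_norm'
        (a := fun j => C * M ^ (N + 1) * Real.exp (-((nseq j : ℝ) * t)))
    · filter_upwards [hns.eventually hmem] with j hj
      rw [norm_mul, Real.norm_eq_abs, Real.norm_eq_abs, abs_of_pos (Real.exp_pos _)]
      have hb := norm_iterate_le ht hU x (nseq j)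
      calc Real.exp ((N:ℝ) * nseq j * t) *
            |h ((phiMap t U)^[nseq j] x) -
              MvPolynomial.eval (sEval ((phiMap t U)^[nseq j] x)) Q|
          ≤ Real.exp ((N:ℝ) * nseq j * t) *
            (C * ‖(phiMap t U)^[nseq j] x‖ ^ (N + 1)) :=
            mul_le_mul_of_nonneg_left (hE _ hj) (Real.exp_pos _).le
        _ ≤ Real.exp ((N:ℝ) * nseq j * t) *
            (C * (Real.exp (-t) ^ nseq j * M) ^ (N + 1)) := by
            apply mul_le_mul_of_nonneg_left _ (Real.exp_pos _).le
            exact mul_le_mul_of_nonneg_left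
              (pow_le_pow_left₀ (norm_nonneg _) hb _) hC.le
        _ = C * M ^ (N + 1) *
            (Real.exp ((N:ℝ) * nseq j * t) * (Real.exp (-t) ^ nseq j) ^ (N + 1)) := by
            rw [mul_pow]; ring
        _ = C * M ^ (N + 1) * Real.exp (-((nseq j : ℝ) * t)) := by rw [hexpid]
    · have h1 : Tendsto (fun j => -((nseq j : ℝ) * t)) atTop atBot := by
        apply tendsto_neg_atBot_iff.mpr
        exact (tendsto_natCast_atTop_atTop.comp hns).atTop_mul_const ht
      have h2 : Tendsto (fun j => Real.exp (-((nseq j : ℝ) * t))) atTop (nhds 0) :=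
        Real.tendsto_exp_atBot.comp h1
      have := h2.const_mul (C * M ^ (N + 1))
      rwa [mul_zero] at this
  -- combine
  rw [htarget]
  have hsplit : (fun j => Real.exp ((N : ℝ) * nseq j * t) * h ((phiMap t U)^[nseq j] x))
      = fun j => (Real.exp ((N : ℝ) * nseq j * t) *
          (h ((phiMap t U)^[nseq j] x) -
            MvPolynomial.eval (sEval ((phiMap t U)^[nseq j] x)) Q)) +
        Real.exp ((N : ℝ) * nseq j * t) *
          MvPolynomial.eval (sEval ((phiMap t U)^[nseq j] x)) Q := by
    funext j
    ring
  rw [hsplit]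
  have := herr.add hpoly
  rwa [zero_add] at this
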